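/- Let G be an oriented graph whose vertex set is ℕ, with path space Γ_G, shift σ and distance d. Let V be a set of vertices with {0,1,…,p+2} ⊆ V. Then for every ū ∈ Γ_G and every n ≥ 1, C^G(ū,V) ⊆ B_n(ū, 2^{−p}), where B_n is the Bowen ball for σ with respect to d. -/

import Mathlib

open Filter Set
open scoped ENNReal NNReal

/-- An oriented graph: a set of vertices and arrows (at most one arrow `u → v`
for each ordered pair), every arrow joining two vertices of the graph. -/
structure OGraph (V : Type*) where
  verts : Set V
  Adj : V → V → Prop
  mem_of_adj : ∀ ⦃u v⦄, Adj u v → u ∈ verts ∧ v ∈ verts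

namespace OGraph

variable {V W : Type*}

/-- `H` is a subgraph of `G`. -/
def IsSubgraph (H G : OGraph V) : Prop :=
  H.verts ⊆ G.verts ∧ ∀ ⦃u v⦄, H.Adj u v → G.Adj u v

/-- The set of paths `(u_0, …, u_n)` of length `n` from `u` to `v` in `G`. -/
def pathSet (G : OGraph V) (u v : V) (n : ℕ) : Set (Fin (n + 1) → V) :=
  {f | f 0 = u ∧ f (Fin.last n) = v ∧ (∀ i, f i ∈ G.verts) ∧
    ∀ i : Fin n, G.Adj (f i.castSucc) (f i.succ)}

/-- `p_{uv}^G(n)`: the number of paths of length `n` from `u` to `v` in `G`. -/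
noncomputable def pCount (G : OGraph V) (u v : V) (n : ℕ) : ℕ :=
  (G.pathSet u v n).ncard

/-- All path counts of `G` are finite. -/
def FiniteCounts (G : OGraph V) : Prop := ∀ u v n, (G.pathSet u v n).Finite

/-- `G` is (strongly) connected: there is a path between any two vertices. -/
def Connected (G : OGraph V) : Prop :=
  ∀ u ∈ G.verts, ∀ v ∈ G.verts, ∃ n, (G.pathSet u v n).Nonempty

/-- The set of paths `(u_0, …, u_n)` from `u` to `v` avoiding `v` strictly in between. -/
def fpathSet (G : OGraph V) (u v : V) (n : ℕ) : Set (Fin (n + 1) → V) :=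
  {f ∈ G.pathSet u v n | ∀ i : Fin (n + 1), i ≠ 0 → i ≠ Fin.last n → f i ≠ v}

/-- `f_{uv}^G(n)`: the number of paths `(u_0, …, u_n)` with `u_0 = u`, `u_n = v` and
`u_i ≠ v` for `0 < i < n` (set to `0` for `n = 0`). -/
noncomputable def fCount (G : OGraph V) (u v : V) (n : ℕ) : ℕ :=
  if n = 0 then 0 else (G.fpathSet u v n).ncard

/-- The radius of convergence of the power series `∑ a_n zⁿ`. -/
noncomputable def radius (a : ℕ → ℕ) : ℝ≥0∞ :=
  ⨆ (r : ℝ≥0) (_ : ∃ C : ℝ, ∀ n, (a n : ℝ) * (r : ℝ) ^ n ≤ C), (r : ℝ≥0∞)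

/-- `R_{uv}(G)`: the radius of convergence of `∑ p_{uv}^G(n) zⁿ`. -/
noncomputable def pRadius (G : OGraph V) (u v : V) : ℝ≥0∞ := radius (G.pCount u v)

/-- `L_{uv}(G)`: the radius of convergence of `∑_{n ≥ 1} f_{uv}^G(n) zⁿ`. -/
noncomputable def fRadius (G : OGraph V) (u v : V) : ℝ≥0∞ := radius (G.fCount u v)

/-- `R(G)`; for a connected graph it coincides with every `R_{uv}(G)`. -/
noncomputable def gRadius (G : OGraph V) : ℝ≥0∞ :=
  ⨅ u ∈ G.verts, ⨅ v ∈ G.verts, G.pRadius u v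

/-- The Gurevich entropy `h(G) = - log R(G)`. -/
noncomputable def entropy (G : OGraph V) : EReal := - ENNReal.log G.gRadius

/-- The exponential growth rate `limsup (1/n) log a_n` (with `log 0 = -∞`). -/
noncomputable def egrowth (a : ℕ → ℕ) : EReal :=
  Filter.atTop.limsup fun n : ℕ => (((n : ℝ)⁻¹ : ℝ) : EReal) * ENNReal.log ((a n : ℝ≥0∞))

/-- The entropy of a (not necessarily connected) graph:
`sup_{u ∈ V(H)} limsup (1/n) log p_{uu}^H(n)`. -/
noncomputable def supEntropy (G : OGraph V) : EReal :=
  ⨆ u ∈ G.verts, egrowth (G.pCount u u)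

/-- `∑_{n ≥ 1} f_{uu}^G(n) xⁿ`, in `[0, ∞]`. -/
noncomputable def loopSum (G : OGraph V) (u : V) (x : ℝ≥0∞) : ℝ≥0∞ :=
  ∑' n : ℕ, (G.fCount u u n : ℝ≥0∞) * x ^ n

/-- `∑_{n ≥ 1} n f_{uu}^G(n) xⁿ`, in `[0, ∞]`. -/
noncomputable def loopMeanSum (G : OGraph V) (u : V) (x : ℝ≥0∞) : ℝ≥0∞ :=
  ∑' n : ℕ, (n : ℝ≥0∞) * (G.fCount u u n : ℝ≥0∞) * x ^ n

/-- A connected graph is transient if `∑_{n ≥ 1} f_{uu}^G(n) R(G)ⁿ < 1`. -/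
def Transient (G : OGraph V) : Prop := ∀ u ∈ G.verts, G.loopSum u G.gRadius < 1

/-- A connected graph is recurrent if `∑_{n ≥ 1} f_{uu}^G(n) R(G)ⁿ = 1`. -/
def Recurrent (G : OGraph V) : Prop := ∀ u ∈ G.verts, G.loopSum u G.gRadius = 1

/-- Positive recurrent: recurrent and `∑_{n ≥ 1} n f_{uu}^G(n) R(G)ⁿ < ∞`. -/
def PosRecurrent (G : OGraph V) : Prop :=
  G.Recurrent ∧ ∀ u ∈ G.verts, G.loopMeanSum u G.gRadius < ⊤

/-- Null recurrent: recurrent and `∑_{n ≥ 1} n f_{uu}^G(n) R(G)ⁿ = ∞`. -/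
def NullRecurrent (G : OGraph V) : Prop :=
  G.Recurrent ∧ ∀ u ∈ G.verts, G.loopMeanSum u G.gRadius = ⊤

/-- `G` embeds in `H` via `ι` (`G ⊂ H` after identifying `V(G)` with its image). -/
def Embeds (G : OGraph V) (H : OGraph W) (ι : V → W) : Prop :=
  Function.Injective ι ∧ (∀ v ∈ G.verts, ι v ∈ H.verts) ∧
    ∀ ⦃u v⦄, G.Adj u v → H.Adj (ι u) (ι v)

/-- `G` embeds in `H` via `ι` as a proper subgraph (`G ⊊ H`). -/
def ProperEmbeds (G : OGraph V) (H : OGraph W) (ι : V → W) : Prop :=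
  G.Embeds H ι ∧
    ¬ ((∀ w ∈ H.verts, w ∈ ι '' G.verts) ∧ ∀ ⦃a b⦄, H.Adj (ι a) (ι b) → G.Adj a b)

end OGraph


open OGraph

/-- The shift map on two-sided sequences. -/
def shift {α : Type*} (x : ℤ → α) : ℤ → α := fun n => x (n + 1)

/-- `Γ_G`: the set of two-sided infinite paths in `G`. -/
def OGraph.pathsZ (G : OGraph ℕ) : Set (ℤ → ℕ) :=
  {u | ∀ n : ℤ, G.Adj (u n) (u (n + 1))}

/-- `D(a,b) = |2⁻ᵃ - 2⁻ᵇ|` on the vertex set `ℕ`. -/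
noncomputable def vdist (a b : ℕ) : ℝ := |(2 : ℝ)⁻¹ ^ a - (2 : ℝ)⁻¹ ^ b|

/-- The distance `d` on the path space `Γ_G ⊆ ℤ → ℕ`. -/
noncomputable def pdist (u v : ℤ → ℕ) : ℝ :=
  ∑' n : ℤ, vdist (u n) (v n) * (2 : ℝ)⁻¹ ^ n.natAbs

/-- The embedding of `ℕ ∪ {∞}` into `ℝ` sending `a` to `2⁻ᵃ` (and `∞` to `0`):
sequences of vertices become sequences of reals, on which the distance `d`
(and its extension to the compactification) is given by `rdist`. -/
noncomputable def embed (u : ℤ → ℕ) : ℤ → ℝ := fun n => (2 : ℝ)⁻¹ ^ (u n)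

/-- The distance `d` extended to the compactification `(ℕ ∪ {∞})^ℤ`,
realized on sequences of reals. -/
noncomputable def rdist (x y : ℤ → ℝ) : ℝ :=
  ∑' n : ℤ, |x n - y n| * (2 : ℝ)⁻¹ ^ n.natAbs

/-- The Bowen ball of centre `x`, radius `ε` and order `n`. -/
def bowenBall {X : Type*} (ρ : X → X → ℝ) (T : X → X) (x : X) (ε : ℝ) (n : ℕ) : Set X :=
  {y | ∀ i < n, ρ (T^[i] x) (T^[i] y) < ε}

/-- `E` is a `(δ, n)`-separated set. -/
def IsSeparated {X : Type*} (ρ : X → X → ℝ) (T : X → X) (δ : ℝ) (n : ℕ) (E : Set X) : Prop :=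
  ∀ y ∈ E, ∀ z ∈ E, y ≠ z → ∃ k < n, δ ≤ ρ (T^[k] y) (T^[k] z)

/-- `s_n(δ, Y)`: the maximal cardinality of a `(δ, n)`-separated subset of `Y`. -/
noncomputable def sepCount {X : Type*} (ρ : X → X → ℝ) (T : X → X) (δ : ℝ) (n : ℕ)
    (Y : Set X) : ℝ≥0∞ :=
  ⨆ (E : Set X) (_ : E ⊆ Y) (_ : IsSeparated ρ T δ n E), (E.encard : ℝ≥0∞)

/-- The local entropy of `T` on `Y`:
`h_loc = lim_{ε → 0} lim_{δ → 0} limsup_n (1/n) sup_x log s_n(δ, B_n(x,ε))`,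
the (monotone) limits being written as `⨅`/`⨆`. -/
noncomputable def hlocOn {X : Type*} (ρ : X → X → ℝ) (T : X → X) (Y : Set X) : EReal :=
  ⨅ ε ∈ Set.Ioi (0 : ℝ), ⨆ δ ∈ Set.Ioi (0 : ℝ),
    Filter.atTop.limsup fun n : ℕ =>
      (((n : ℝ)⁻¹ : ℝ) : EReal) *
        ENNReal.log (⨆ x ∈ Y, sepCount ρ T δ n (bowenBall ρ T x ε n ∩ Y))

/-- `C^G(ū, V)`: the set of paths agreeing with `ū` on `V` and avoiding `V` exactly when `ū`
does. -/
def cylSet (G : OGraph ℕ) (u : ℤ → ℕ) (Vs : Set ℕ) : Set (ℤ → ℕ) :=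
  {v ∈ G.pathsZ | ∀ n : ℤ, (u n ∈ Vs → v n = u n) ∧ (u n ∉ Vs → v n ∉ Vs)}


section BowenAux

lemma geom_nat_hs : HasSum (fun n : ℕ => (2:ℝ)⁻¹ ^ ((n : ℤ)).natAbs) 2 := by
  have h : (fun n : ℕ => (2:ℝ)⁻¹ ^ ((n:ℤ)).natAbs) = fun n : ℕ => (2:ℝ)⁻¹ ^ n := by
    funext n; simp
  rw [h]
  have := hasSum_geometric_of_lt_one (by norm_num : (0:ℝ) ≤ 2⁻¹) (by norm_num : (2:ℝ)⁻¹ < 1)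
  norm_num at this ⊢
  convert this using 2

lemma geom_neg_hs : HasSum (fun n : ℕ => (2:ℝ)⁻¹ ^ ((-((n:ℤ) + 1)).natAbs)) 1 := by
  have h : (fun n : ℕ => (2:ℝ)⁻¹ ^ ((-((n:ℤ) + 1)).natAbs))
      = fun n : ℕ => (2:ℝ)⁻¹ * (2:ℝ)⁻¹ ^ n := by
    funext n
    have h2 : (-((n:ℤ) + 1)).natAbs = n + 1 := by omega
    rw [h2, pow_succ, mul_comm]
  rw [h]
  have := (hasSum_geometric_of_lt_one (by norm_num : (0:ℝ) ≤ 2⁻¹)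
    (by norm_num : (2:ℝ)⁻¹ < 1)).mul_left (2:ℝ)⁻¹
  rw [show (2:ℝ)⁻¹ * (1 - 2⁻¹)⁻¹ = 1 by norm_num] at this
  exact this

lemma geomZ_hs : HasSum (fun n : ℤ => (2 : ℝ)⁻¹ ^ n.natAbs) 3 := by
  rw [show (3:ℝ) = 2 + 1 from by norm_num]
  exact HasSum.of_nat_of_neg_add_one geom_nat_hs geom_neg_hs

lemma shift_iterate {α : Type*} (x : ℤ → α) (i : ℕ) (m : ℤ) :
    (shift^[i] x) m = x (m + i) := by
  induction i generalizing x with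
  | zero => simp
  | succ k ih =>
      rw [Function.iterate_succ_apply, ih]
      simp only [shift]
      congr 1
      push_cast
      ring

lemma pdist_lt_of_vdist_le (a b : ℤ → ℕ) (p : ℕ)
    (h : ∀ m : ℤ, vdist (a m) (b m) ≤ (2:ℝ)⁻¹ ^ (p + 3)) :
    pdist a b < (2:ℝ)⁻¹ ^ p := by
  set c : ℝ := (2:ℝ)⁻¹ ^ (p + 3) with hc
  have hc0 : 0 ≤ c := by positivity
  have hsum : Summable (fun m : ℤ => c * (2:ℝ)⁻¹ ^ m.natAbs) :=
    geomZ_hs.summable.mul_left c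
  have hle : ∀ m : ℤ, vdist (a m) (b m) * (2:ℝ)⁻¹ ^ m.natAbs ≤ c * (2:ℝ)⁻¹ ^ m.natAbs := by
    intro m
    exact mul_le_mul_of_nonneg_right (h m) (by positivity)
  have hnn : ∀ m : ℤ, 0 ≤ vdist (a m) (b m) * (2:ℝ)⁻¹ ^ m.natAbs := by
    intro m
    have : 0 ≤ vdist (a m) (b m) := abs_nonneg _
    positivity
  have hsum' : Summable (fun m : ℤ => vdist (a m) (b m) * (2:ℝ)⁻¹ ^ m.natAbs) :=
    Summable.of_nonneg_of_le hnn hle hsum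
  have h1 : pdist a b ≤ ∑' m : ℤ, c * (2:ℝ)⁻¹ ^ m.natAbs :=
    Summable.tsum_le_tsum hle hsum' hsum
  have h2 : ∑' m : ℤ, c * (2:ℝ)⁻¹ ^ m.natAbs = c * 3 := by
    rw [tsum_mul_left, geomZ_hs.tsum_eq]
  have h3 : c * 3 < (2:ℝ)⁻¹ ^ p := by
    rw [hc, pow_add]
    have hp : (0:ℝ) < (2:ℝ)⁻¹ ^ p := by positivity
    nlinarith
  calc pdist a b ≤ c * 3 := h2 ▸ h1
    _ < (2:ℝ)⁻¹ ^ p := h3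

end BowenAux

/-- If `{0, …, p+2} ⊆ V`, then for every `ū ∈ Γ_G` and every `n ≥ 1`,
`C^G(ū, V) ⊆ B_n(ū, 2⁻ᵖ)`. -/
theorem cylSet_subset_bowenBall (G : OGraph ℕ) (Vs : Set ℕ) (p : ℕ)
    (hV : ∀ k ≤ p + 2, k ∈ Vs) (u : ℤ → ℕ) (hu : u ∈ G.pathsZ) (n : ℕ) (hn : 1 ≤ n) :
    cylSet G u Vs ⊆ bowenBall pdist shift u ((2 : ℝ)⁻¹ ^ p) n := by
  intro v hv
  intro i _hi
  apply pdist_lt_of_vdist_le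
  intro m
  have hcyl := hv.2 (m + i)
  by_cases hmem : u (m + i) ∈ Vs
  · have := hcyl.1 hmem
    simp only [vdist, shift_iterate, this, sub_self, abs_zero]
    positivity
  · have hv' : v (m + i) ∉ Vs := hcyl.2 hmem
    have hu3 : p + 3 ≤ u (m + i) := by
      by_contra hlt
      exact hmem (hV _ (by omega))
    have hv3 : p + 3 ≤ v (m + i) := by
      by_contra hlt
      exact hv' (hV _ (by omega))
    have key : ∀ k : ℕ, p + 3 ≤ k → (2:ℝ)⁻¹ ^ k ≤ (2:ℝ)⁻¹ ^ (p + 3) := fun k hk =>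
      pow_le_pow_of_le_one (by norm_num) (by norm_num) hk
    simp only [vdist, shift_iterate]
    rw [abs_sub_le_iff]
    constructor
    · have := key _ hu3
      have : (0:ℝ) ≤ (2:ℝ)⁻¹ ^ (v (m + i)) := by positivity
      linarith [key _ hu3]
    · have : (0:ℝ) ≤ (2:ℝ)⁻¹ ^ (u (m + i)) := by positivity
      linarith [key _ hv3]
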